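/- If J and K are closed two-sided ideals of a C*-algebra C, then J + K is a closed ideal of C. -/

import Mathlib

open Unitization

set_option maxHeartbeats 1000000 in
theorem exists_approx_unit {C : Type*} [NonUnitalCStarAlgebra C]
    (J : TwoSidedIdeal C) {j : C} (hj : j ∈ J) {ε : ℝ} (hε : 0 < ε) :
    ∃ e, e ∈ J ∧ ‖j - e * j‖ < ε ∧ ∀ w : C, ‖w - e * w‖ ≤ ‖w‖ := by
  letI : PartialOrder (Unitization ℂ C) := CStarAlgebra.spectralOrder _
  letI : StarOrderedRing (Unitization ℂ C) := CStarAlgebra.spectralOrderedRing _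
  set s : ℝ := (ε ^ 2)⁻¹ with hs_def
  have hs : 0 < s := by positivity
  set t : ℝ := s ^ 2 with ht_def
  have ht : 0 < t := by positivity
  set a : C := j * star j with ha_def
  have haJ : a ∈ J := J.mul_mem_right _ _ hj
  have ha : IsSelfAdjoint a := IsSelfAdjoint.mul_star_self j
  set f : ℝ → ℝ := fun x => t * x ^ 2 / (1 + t * x ^ 2) with hf_def
  set g : ℝ → ℝ := fun x => t * x / (1 + t * x ^ 2) with hg_def
  have hden : ∀ x : ℝ, 0 < 1 + t * x ^ 2 := fun x => by positivity
  have hf_cont : Continuous f := by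
    apply Continuous.div (by fun_prop) (by fun_prop)
    exact fun x => (hden x).ne'
  have hg_cont : Continuous g := by
    apply Continuous.div (by fun_prop) (by fun_prop)
    exact fun x => (hden x).ne'
  have hf0 : f 0 = 0 := by simp [hf_def]
  have hg0 : g 0 = 0 := by simp [hg_def]
  have hf_nonneg : ∀ x : ℝ, 0 ≤ f x := fun x =>
    div_nonneg (by positivity) (hden x).le
  have hf_le_one : ∀ x : ℝ, f x ≤ 1 := fun x => by
    rw [hf_def, div_le_one (hden x)]; linarith
  set e : C := cfcₙ f a with he_def
  -- membership of `e` in the ideal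
  have heJ : e ∈ J := by
    have h1 : e = cfcₙ (fun x : ℝ => x * g x) a := by
      refine cfcₙ_congr fun x hx => ?_
      simp only [hf_def, hg_def]
      field_simp
    have h2 : cfcₙ (fun x : ℝ => x * g x) a
        = cfcₙ (fun x : ℝ => x) a * cfcₙ g a :=
      cfcₙ_mul _ _ a (by fun_prop) rfl hg_cont.continuousOn hg0
    rw [h1, h2, cfcₙ_id' ℝ a]
    exact J.mul_mem_right _ _ haJ
  -- pass to the unitization
  set u : Unitization ℂ C := (a : Unitization ℂ C) with hu_def
  have hu : IsSelfAdjoint u := (Unitization.isSelfAdjoint_inr (R := ℂ)).mpr ha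
  have hEe : (e : Unitization ℂ C) = cfc f u :=
    Unitization.real_cfcₙ_eq_cfc_inr a f hf0
  have hE0 : (0 : Unitization ℂ C) ≤ cfc f u :=
    cfc_nonneg fun x _ => hf_nonneg x
  have hE1 : cfc f u ≤ 1 := cfc_le_one f u fun x _ => hf_le_one x
  have h1E0 : (0 : Unitization ℂ C) ≤ 1 - cfc f u := sub_nonneg.mpr hE1
  have h1E1 : 1 - cfc f u ≤ 1 := by
    exact sub_le_self _ hE0
  have hnorm1E : ‖(1 : Unitization ℂ C) - cfc f u‖ ≤ 1 :=
    (CStarAlgebra.norm_le_one_iff_of_nonneg _ h1E0).mpr h1E1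
  have hinr : ∀ w : C, ((w - e * w : C) : Unitization ℂ C)
      = (1 - cfc f u) * (w : Unitization ℂ C) := fun w => by
    rw [Unitization.inr_sub ℂ, Unitization.inr_mul, hEe, sub_mul, one_mul]
  have hcontr : ∀ w : C, ‖w - e * w‖ ≤ ‖w‖ := fun w => by
    calc ‖w - e * w‖ = ‖((w - e * w : C) : Unitization ℂ C)‖ :=
          (Unitization.norm_inr _).symm
    _ = ‖(1 - cfc f u) * (w : Unitization ℂ C)‖ := by rw [hinr]
    _ ≤ ‖(1 : Unitization ℂ C) - cfc f u‖ * ‖(w : Unitization ℂ C)‖ := norm_mul_le _ _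
    _ ≤ 1 * ‖w‖ := by
        rw [Unitization.norm_inr]
        exact mul_le_mul_of_nonneg_right hnorm1E (norm_nonneg _)
    _ = ‖w‖ := one_mul _
  -- smallness of ‖j - e * j‖
  have hsmall : ‖j - e * j‖ < ε := by
    have hone : (1 : Unitization ℂ C) - cfc f u = cfc (fun x : ℝ => 1 - f x) u := by
      rw [cfc_sub _ _ u (by fun_prop) hf_cont.continuousOn, cfc_const_one ℝ u]
    set z : Unitization ℂ C := (1 - cfc f u) * (j : Unitization ℂ C) with hz_def
    have hz1 : ((j - e * j : C) : Unitization ℂ C) = z := hinr j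
    have hsa1E : IsSelfAdjoint ((1 : Unitization ℂ C) - cfc f u) := by
      rw [hone]; exact cfc_predicate _ u
    have h1f_cont : Continuous fun x : ℝ => 1 - f x := continuous_const.sub hf_cont
    have hzz : z * star z = cfc (fun x : ℝ => (1 - f x) * x * (1 - f x)) u := by
      have hstar : star z = star (j : Unitization ℂ C) * (1 - cfc f u) := by
        rw [hz_def, star_mul, hsa1E.star_eq]
      have hmid : (j : Unitization ℂ C) * star (j : Unitization ℂ C) = u := by
        rw [← Unitization.inr_star, ← Unitization.inr_mul, hu_def, ha_def]
      have hA : cfc (fun x : ℝ => (1 - f x) * x) u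
          = cfc (fun x : ℝ => 1 - f x) u * cfc (fun x : ℝ => x) u :=
        cfc_mul _ _ u h1f_cont.continuousOn continuousOn_id
      have hB : cfc (fun x : ℝ => (1 - f x) * x * (1 - f x)) u
          = cfc (fun x : ℝ => (1 - f x) * x) u * cfc (fun x : ℝ => 1 - f x) u :=
        cfc_mul _ _ u (h1f_cont.mul continuous_id).continuousOn h1f_cont.continuousOn
      have hmain : z * star z = (1 - cfc f u) * u * (1 - cfc f u) := by
        rw [hz_def, hstar, ← hmid]
        simp only [mul_assoc]
      rw [hmain, hB, hA, cfc_id' ℝ u, hone]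
    have hbound : ∀ x : ℝ, |(1 - f x) * x * (1 - f x)| ≤ ε ^ 2 / 2 := by
      intro x
      have hd := hden x
      have h1fx : 1 - f x = 1 / (1 + t * x ^ 2) := by
        rw [hf_def]
        field_simp
        ring
      have key : 2 * s * |x| ≤ 1 + t * x ^ 2 := by
        nlinarith [sq_nonneg (1 - s * |x|), sq_abs x]
      have h2 : ε ^ 2 / 2 = 1 / (2 * s) := by
        rw [hs_def]; field_simp
      have habs : |(1 - f x) * x * (1 - f x)|
          = |x| / ((1 + t * x ^ 2) * (1 + t * x ^ 2)) := by
        rw [h1fx, abs_mul, abs_mul,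
          abs_of_pos (show (0:ℝ) < 1 / (1 + t * x ^ 2) by positivity)]
        field_simp
      rw [habs, h2, div_le_div_iff₀ (by positivity) (by positivity)]
      have hd1 : (1:ℝ) ≤ 1 + t * x ^ 2 := by nlinarith [sq_nonneg x]
      nlinarith [key, hd1, abs_nonneg x, hs, mul_le_mul_of_nonneg_left hd1 hd.le]
    have hnormz : ‖z‖ * ‖z‖ ≤ ε ^ 2 / 2 := by
      rw [← CStarRing.norm_self_mul_star (x := z), hzz]
      exact norm_cfc_le (by positivity) fun x _ => by
        simpa [Real.norm_eq_abs, abs_mul] using hbound x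
    have : ‖j - e * j‖ * ‖j - e * j‖ ≤ ε ^ 2 / 2 := by
      rw [← Unitization.norm_inr (𝕜 := ℂ) (j - e * j), hz1]
      exact hnormz
    nlinarith [norm_nonneg (j - e * j), hε]
  exact ⟨e, heJ, hsmall, hcontr⟩

/-- Distance transfer: for `z ∈ K` and `j ∈ J` one can find `c ∈ J ∩ K` nearly as close to `z`
as `j` is. -/
theorem exists_close_in_inter {C : Type*} [NonUnitalCStarAlgebra C]
    (J K : TwoSidedIdeal C) {z : C} (hz : z ∈ K) {j : C} (hj : j ∈ J)
    {δ : ℝ} (hδ : 0 < δ) :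
    ∃ c, c ∈ J ∧ c ∈ K ∧ ‖z - c‖ ≤ ‖z - j‖ + δ := by
  obtain ⟨e, heJ, hsmall, hcontr⟩ := exists_approx_unit J hj hδ
  refine ⟨e * z, J.mul_mem_right _ _ heJ, K.mul_mem_left _ _ hz, ?_⟩
  have hid : z - e * z = ((z - j) - e * (z - j)) + (j - e * j) := by
    rw [mul_sub]; abel
  calc ‖z - e * z‖ = ‖((z - j) - e * (z - j)) + (j - e * j)‖ := by rw [hid]
  _ ≤ ‖(z - j) - e * (z - j)‖ + ‖j - e * j‖ := norm_add_le _ _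
  _ ≤ ‖z - j‖ + δ := add_le_add (hcontr _) hsmall.le

open Filter Topology in
theorem sum_closed {C : Type*} [NonUnitalCStarAlgebra C]
    (J K : TwoSidedIdeal C) (hJ : IsClosed (J : Set C)) (hK : IsClosed (K : Set C)) :
    IsClosed {x : C | ∃ j ∈ J, ∃ k ∈ K, x = j + k} := by
  refine isClosed_of_closure_subset fun x hx => ?_
  have H : ∀ n : ℕ, ∃ jk : C × C, jk.1 ∈ J ∧ jk.2 ∈ K ∧
      ‖x - (jk.1 + jk.2)‖ < (1/2 : ℝ) ^ n := by
    intro n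
    have hpos : (0:ℝ) < (1/2) ^ n := by positivity
    obtain ⟨y, hyS, hxy⟩ := Metric.mem_closure_iff.mp hx _ hpos
    obtain ⟨j, hj, k, hk, rfl⟩ := hyS
    exact ⟨(j, k), hj, hk, by rwa [← dist_eq_norm]⟩
  choose jk hj hk hjk using H
  set j : ℕ → C := fun n => (jk n).1 with hj_def
  set k : ℕ → C := fun n => (jk n).2 with hk_def
  have Hc : ∀ n : ℕ, ∃ c, c ∈ J ∧ c ∈ K ∧
      ‖(k (n+1) - k n) - c‖ ≤ ‖(k (n+1) - k n) - (j n - j (n+1))‖ + (1/2 : ℝ) ^ n :=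
    fun n => exists_close_in_inter J K (K.sub_mem (hk (n+1)) (hk n))
      (J.sub_mem (hj n) (hj (n+1))) (by positivity)
  choose c hcJ hcK hc using Hc
  set S : ℕ → C := fun n => ∑ i ∈ Finset.range n, c i with hS_def
  have hSJ : ∀ n, S n ∈ J := fun n => sum_mem fun i _ => hcJ i
  have hSK : ∀ n, S n ∈ K := fun n => sum_mem fun i _ => hcK i
  set kk : ℕ → C := fun n => k n - S n with hkk_def
  have hkkK : ∀ n, kk n ∈ K := fun n => K.sub_mem (hk n) (hSK n)
  have hb : ∀ n, ‖(k (n+1) - k n) - c n‖ ≤ 3 * (1/2 : ℝ) ^ n := by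
    intro n
    have h1 : (k (n+1) - k n) - (j n - j (n+1))
        = (x - (j n + k n)) - (x - (j (n+1) + k (n+1))) := by abel
    have h2 : ‖(k (n+1) - k n) - (j n - j (n+1))‖
        ≤ (1/2 : ℝ) ^ n + (1/2 : ℝ) ^ (n+1) := by
      rw [h1]
      exact (norm_sub_le _ _).trans (add_le_add (hjk n).le (hjk (n+1)).le)
    have h3 : ((1:ℝ)/2) ^ (n+1) ≤ (1/2 : ℝ) ^ n := by
      apply pow_le_pow_of_le_one <;> norm_num
    calc ‖(k (n+1) - k n) - c n‖
        ≤ ‖(k (n+1) - k n) - (j n - j (n+1))‖ + (1/2 : ℝ) ^ n := hc n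
    _ ≤ ((1/2:ℝ) ^ n + (1/2:ℝ) ^ (n+1)) + (1/2:ℝ) ^ n := add_le_add_left h2 _
    _ ≤ 3 * (1/2 : ℝ) ^ n := by linarith
  have hcs : CauchySeq kk := by
    apply cauchySeq_of_le_geometric (1/2 : ℝ) 3 (by norm_num)
    intro n
    rw [dist_eq_norm, ← norm_neg]
    have : -(kk n - kk (n+1)) = (k (n+1) - k n) - c n := by
      simp only [hkk_def, hS_def, Finset.sum_range_succ]
      abel
    rw [this]
    exact hb n
  obtain ⟨l, hl⟩ := cauchySeq_tendsto_of_complete hcs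
  have hlK : l ∈ K := hK.mem_of_tendsto hl (Eventually.of_forall hkkK)
  have h0 : Tendsto (fun n : ℕ => ((1:ℝ)/2) ^ n) atTop (𝓝 0) :=
    tendsto_pow_atTop_nhds_zero_of_lt_one (by norm_num) (by norm_num)
  have ht1 : Tendsto (fun n => x - (j n + k n)) atTop (𝓝 0) :=
    squeeze_zero_norm (fun n => (hjk n).le) h0
  have ht2 : Tendsto (fun n => j n + S n) atTop (𝓝 (x - l)) := by
    have h4 : Tendsto (fun n => x - (x - (j n + k n)) - kk n) atTop (𝓝 (x - 0 - l)) :=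
      (tendsto_const_nhds.sub ht1).sub hl
    rw [sub_zero] at h4
    refine h4.congr fun n => ?_
    simp only [hkk_def]
    abel
  have hxl : x - l ∈ J := hJ.mem_of_tendsto ht2
    (Eventually.of_forall fun n => J.add_mem (hj n) (hSJ n))
  exact ⟨x - l, hxl, l, hlK, (sub_add_cancel x l).symm⟩

/-- If `J` and `K` are closed two-sided ideals of a C*-algebra `C`, then
`J + K = {j + k : j ∈ J, k ∈ K}` is again a closed two-sided ideal of `C`. -/
theorem sum_of_closed_ideals_isClosed
    {C : Type*} [NonUnitalNormedRing C] [StarRing C] [CStarRing C]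
    [NormedSpace ℂ C] [IsScalarTower ℂ C C] [SMulCommClass ℂ C C]
    [StarModule ℂ C] [CompleteSpace C]
    (J K : TwoSidedIdeal C)
    (hJstar : ∀ x ∈ J, star x ∈ J) (hKstar : ∀ x ∈ K, star x ∈ K)
    (hJ : IsClosed (J : Set C)) (hK : IsClosed (K : Set C)) :
    IsClosed {x : C | ∃ j ∈ J, ∃ k ∈ K, x = j + k} ∧
      ∃ I : TwoSidedIdeal C, (I : Set C) = {x : C | ∃ j ∈ J, ∃ k ∈ K, x = j + k} := by
  letI : NonUnitalCStarAlgebra C := { }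
  refine ⟨sum_closed J K hJ hK, J ⊔ K, ?_⟩
  ext x
  rw [SetLike.mem_coe, TwoSidedIdeal.mem_sup]
  constructor
  · rintro ⟨y, hy, z, hz, rfl⟩
    exact ⟨y, hy, z, hz, rfl⟩
  · rintro ⟨y, hy, z, hz, rfl⟩
    exact ⟨y, hy, z, hz, rfl⟩
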